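/- Let γ ∈ (0, 1/2) and ε ∈ (0,1). If η ≥ ln(ε) / (2 ln(1−2γ)) (equivalently (1−2γ)^{2η} ≤ ε), then for any finite Fourier series f on 𝕋^L with ‖f‖_{L²} ≤ 1, the noisy function f_noisy(θ) = Σ_ω (1−2γ)^{‖ω‖₁} a_ω e^{iω·θ} satisfies E_θ |f_noisy(θ) − f_noisy^{(η)}(θ)|² ≤ ε, where f_noisy^{(η)} keeps only frequencies with ‖ω‖₁ ≤ η. -/

import Mathlib

set_option maxHeartbeats 1000000

open MeasureTheory Complex

noncomputable def eF {L : ℕ} (ν : Fin L → ℤ) (θ : Fin L → ℝ) : ℂ :=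
  Complex.exp (Complex.I * ∑ k, (ν k : ℂ) * (θ k : ℂ))

lemma eF_prod {L : ℕ} (ν : Fin L → ℤ) (θ : Fin L → ℝ) :
    eF ν θ = ∏ k, Complex.exp (Complex.I * (ν k : ℂ) * (θ k : ℂ)) := by
  rw [eF, Finset.mul_sum, Complex.exp_sum]
  congr 1; ext k; ring_nf

lemma oneD (n : ℤ) :
    ∫ x in Set.Ico (0:ℝ) (2*Real.pi), Complex.exp (Complex.I * (n:ℂ) * (x:ℂ))
      = if n = 0 then ((2*Real.pi : ℝ) : ℂ) else 0 := by
  have h02 : (0:ℝ) ≤ 2 * Real.pi := by positivity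
  rw [integral_Ico_eq_integral_Ioo, ← integral_Ioc_eq_integral_Ioo, ← intervalIntegral.integral_of_le h02]
  by_cases hn : n = 0
  · simp [hn]
  · rw [if_neg hn]
    have hc : (Complex.I * (n:ℂ)) ≠ 0 := by
      simp [Complex.I_ne_zero, Complex.ext_iff, hn]
    have := integral_exp_mul_complex (a := 0) (b := 2*Real.pi) hc
    simp only [Complex.ofReal_zero, mul_zero, Complex.exp_zero] at this
    rw [show (fun x : ℝ => Complex.exp (Complex.I * (n:ℂ) * (x:ℂ)))
        = fun x : ℝ => Complex.exp ((Complex.I * (n:ℂ)) * (x:ℂ)) from rfl, this]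
    have : Complex.exp (Complex.I * (n:ℂ) * ((2*Real.pi : ℝ):ℂ)) = 1 := by
      rw [show Complex.I * (n:ℂ) * ((2*Real.pi : ℝ):ℂ) = (n:ℂ) * (2 * (Real.pi:ℂ) * Complex.I) by
        push_cast; ring]
      exact Complex.exp_int_mul_two_pi_mul_I n
    rw [this]; simp

lemma indicator_pi {L : ℕ} (s : Fin L → Set ℝ) (f : Fin L → ℝ → ℂ) :
    (Set.pi Set.univ s).indicator (fun θ => ∏ i, f i (θ i))
      = fun θ => ∏ i, (s i).indicator (f i) (θ i) := by
  funext θ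
  by_cases h : θ ∈ Set.pi Set.univ s
  · rw [Set.indicator_of_mem h]
    exact Finset.prod_congr rfl fun i _ => (Set.indicator_of_mem (h i trivial) _).symm
  · rw [Set.indicator_of_notMem h]
    rw [Set.mem_univ_pi] at h; push_neg at h
    obtain ⟨i, hi⟩ := h
    exact (Finset.prod_eq_zero (Finset.mem_univ i) (Set.indicator_of_notMem hi _)).symm

lemma cube_measurable {L : ℕ} :
    MeasurableSet (Set.pi Set.univ fun _ : Fin L => Set.Ico (0:ℝ) (2 * Real.pi)) :=
  MeasurableSet.univ_pi fun _ => measurableSet_Ico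

lemma integrableOn_cube_prod {L : ℕ} (f : Fin L → ℝ → ℂ)
    (hf : ∀ i, IntegrableOn (f i) (Set.Ico (0:ℝ) (2 * Real.pi))) :
    IntegrableOn (fun θ : Fin L → ℝ => ∏ i, f i (θ i))
      (Set.pi Set.univ fun _ => Set.Ico (0:ℝ) (2 * Real.pi)) := by
  have h := Integrable.fintype_prod
    (f := fun i => (Set.Ico (0:ℝ) (2 * Real.pi)).indicator (f i))
    (fun i => (integrable_indicator_iff measurableSet_Ico).2 (hf i))
  rw [← indicator_pi] at h
  exact (integrable_indicator_iff cube_measurable).mp h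

lemma integral_cube_prod {L : ℕ} (f : Fin L → ℝ → ℂ) :
    ∫ θ : Fin L → ℝ in Set.pi Set.univ (fun _ => Set.Ico (0:ℝ) (2 * Real.pi)),
        ∏ i, f i (θ i)
      = ∏ i, ∫ x in Set.Ico (0:ℝ) (2 * Real.pi), f i x := by
  rw [← integral_indicator cube_measurable, indicator_pi,
    integral_fintype_prod_volume_eq_prod
      (f := fun i => (Set.Ico (0:ℝ) (2 * Real.pi)).indicator (f i))]
  exact Finset.prod_congr rfl fun i _ => integral_indicator measurableSet_Ico

lemma eF_integrableOn {L : ℕ} (ν : Fin L → ℤ) :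
    IntegrableOn (eF ν) (Set.pi Set.univ fun _ => Set.Ico (0:ℝ) (2 * Real.pi)) := by
  have h : eF ν = fun θ => ∏ i, Complex.exp (Complex.I * (ν i : ℂ) * ((θ i : ℝ):ℂ)) :=
    funext (eF_prod ν)
  rw [h]
  exact integrableOn_cube_prod (fun i x => Complex.exp (Complex.I * (ν i : ℂ) * (x:ℂ)))
    fun i => ((Complex.continuous_exp.comp
      (continuous_const.mul Complex.continuous_ofReal)).integrableOn_Icc
        (a := 0) (b := 2*Real.pi)).mono_set Set.Ico_subset_Icc_self

lemma eF_integral {L : ℕ} (ν : Fin L → ℤ) :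
    ∫ θ : Fin L → ℝ in Set.pi Set.univ (fun _ => Set.Ico (0:ℝ) (2 * Real.pi)), eF ν θ
      = if ν = 0 then (((2*Real.pi)^L : ℝ) : ℂ) else 0 := by
  have h : (fun θ : Fin L → ℝ => eF ν θ)
      = fun θ => ∏ i, Complex.exp (Complex.I * (ν i : ℂ) * ((θ i : ℝ):ℂ)) :=
    funext (eF_prod ν)
  rw [h, integral_cube_prod (fun i x => Complex.exp (Complex.I * (ν i : ℂ) * (x:ℂ)))]
  simp only [oneD]
  by_cases hν : ν = 0
  · rw [if_pos hν]
    have : ∀ i, ν i = 0 := fun i => by rw [hν]; rfl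
    simp only [this, if_pos]
    rw [Finset.prod_const, Finset.card_univ, Fintype.card_fin]
    push_cast; ring
  · rw [if_neg hν]
    obtain ⟨i, hi⟩ : ∃ i, ν i ≠ 0 := by
      by_contra hc; push_neg at hc; exact hν (funext hc)
    exact Finset.prod_eq_zero (Finset.mem_univ i) (if_neg hi)

lemma eF_conj {L : ℕ} (μ : Fin L → ℤ) (θ : Fin L → ℝ) :
    (starRingEnd ℂ) (eF μ θ) = eF (-μ) θ := by
  rw [eF, eF, ← Complex.exp_conj]
  congr 1
  rw [map_mul, Complex.conj_I, map_sum]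
  rw [neg_mul, Finset.mul_sum, Finset.mul_sum, ← Finset.sum_neg_distrib]
  refine Finset.sum_congr rfl fun k _ => ?_
  simp only [map_mul, Complex.conj_ofReal, map_intCast, Pi.neg_apply]
  push_cast; ring

lemma eF_mul_conj {L : ℕ} (ν μ : Fin L → ℤ) (θ : Fin L → ℝ) :
    eF ν θ * (starRingEnd ℂ) (eF μ θ) = eF (ν - μ) θ := by
  rw [eF_conj, eF, eF, eF, ← Complex.exp_add]
  congr 1
  rw [← mul_add, ← Finset.sum_add_distrib]
  refine congrArg _ (Finset.sum_congr rfl fun k _ => ?_)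
  simp only [Pi.neg_apply, Pi.sub_apply]
  push_cast; ring

/-- If `γ ∈ (0,1/2)`, `ε ∈ (0,1)` and `η ≥ ln(ε)/(2 ln(1-2γ))` (so that
`(1-2γ)^{2η} ≤ ε`), then for any finite Fourier series `f` on `𝕋^L` with
Parseval norm `Σ_ω |a_ω|² ≤ 1`, the truncation of the noisy series
`f_noisy(θ) = Σ_ω (1-2γ)^{‖ω‖₁} a_ω e^{iω·θ}` to frequencies `‖ω‖₁ ≤ η`
satisfies `E_θ |f_noisy(θ) − f_noisy^{(η)}(θ)|² ≤ ε`. -/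
theorem stmt_19 (γ ε : ℝ) (hγ : γ ∈ Set.Ioo (0:ℝ) (1/2)) (hε : ε ∈ Set.Ioo (0:ℝ) 1)
    (η : ℕ) (hη : Real.log ε / (2 * Real.log (1 - 2 * γ)) ≤ (η : ℝ))
    (L : ℕ) (S : Finset (Fin L → ℤ)) (a : (Fin L → ℤ) → ℂ)
    (hParseval : ∑ ω ∈ S, ‖a ω‖ ^ 2 ≤ 1)
    (fnoisy ftrunc : (Fin L → ℝ) → ℂ)
    (hfnoisy : ∀ θ, fnoisy θ = ∑ ω ∈ S,
      ((1 - 2 * γ) ^ (∑ k, (ω k).natAbs) : ℝ) * a ω *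
        Complex.exp (Complex.I * ∑ k, (ω k : ℂ) * (θ k : ℂ)))
    (hftrunc : ∀ θ, ftrunc θ = ∑ ω ∈ S.filter (fun ω => (∑ k, (ω k).natAbs) ≤ η),
      ((1 - 2 * γ) ^ (∑ k, (ω k).natAbs) : ℝ) * a ω *
        Complex.exp (Complex.I * ∑ k, (ω k : ℂ) * (θ k : ℂ))) :
    ((2 * Real.pi) ^ L : ℝ)⁻¹ *
        ∫ θ : Fin L → ℝ in Set.pi Set.univ (fun _ => Set.Ico (0:ℝ) (2 * Real.pi)),
          ‖fnoisy θ - ftrunc θ‖ ^ 2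
      ≤ ε := by
  obtain ⟨hγ0, hγ1⟩ := hγ
  obtain ⟨hε0, hε1⟩ := hε
  set x : ℝ := 1 - 2 * γ with hxdef
  have hx0 : 0 < x := by simp only [hxdef]; linarith
  have hx1 : x < 1 := by simp only [hxdef]; linarith
  have hlogx : Real.log x < 0 := Real.log_neg hx0 hx1
  have hpow : x ^ (2 * η) ≤ ε := by
    have h1 : (η : ℝ) * (2 * Real.log x) ≤ Real.log ε :=
      (div_le_iff_of_neg (by linarith)).mp hη
    have h2 : Real.log (x ^ (2 * η)) ≤ Real.log ε := by
      rw [Real.log_pow]; push_cast; linarith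
    calc x ^ (2 * η) = Real.exp (Real.log (x ^ (2 * η))) :=
          (Real.exp_log (by positivity)).symm
      _ ≤ Real.exp (Real.log ε) := Real.exp_le_exp.mpr h2
      _ = ε := Real.exp_log hε0
  set nrm : (Fin L → ℤ) → ℕ := fun ω => ∑ k, (ω k).natAbs with hnrm
  set T : Finset (Fin L → ℤ) := S.filter (fun ω => ¬ (nrm ω ≤ η)) with hT
  set c : (Fin L → ℤ) → ℂ := fun ω => ((x ^ nrm ω : ℝ) : ℂ) * a ω with hc
  have hdiff : ∀ θ, fnoisy θ - ftrunc θ = ∑ ω ∈ T, c ω * eF ω θ := by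
    intro θ
    rw [hfnoisy θ, hftrunc θ,
      ← Finset.sum_filter_add_sum_filter_not S (fun ω => nrm ω ≤ η)
        (fun ω => ((x ^ nrm ω : ℝ) : ℂ) * a ω *
          Complex.exp (Complex.I * ∑ k, (ω k : ℂ) * (θ k : ℂ))),
      add_sub_cancel_left]
    rfl
  have hInt : ∫ θ : Fin L → ℝ in Set.pi Set.univ (fun _ => Set.Ico (0:ℝ) (2 * Real.pi)),
        ((fnoisy θ - ftrunc θ) * (starRingEnd ℂ) (fnoisy θ - ftrunc θ))
      = (((2 * Real.pi) ^ L : ℝ) : ℂ) * ∑ ω ∈ T, ((‖c ω‖ ^ 2 : ℝ) : ℂ) := by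
    have hrw : ∀ θ : Fin L → ℝ, (fnoisy θ - ftrunc θ) * (starRingEnd ℂ) (fnoisy θ - ftrunc θ)
        = ∑ ω ∈ T, ∑ μ ∈ T, (c ω * (starRingEnd ℂ) (c μ)) * eF (ω - μ) θ := by
      intro θ
      rw [hdiff θ, map_sum, Finset.sum_mul_sum]
      refine Finset.sum_congr rfl fun ω _ => Finset.sum_congr rfl fun μ _ => ?_
      rw [map_mul, show c ω * eF ω θ * ((starRingEnd ℂ) (c μ) * (starRingEnd ℂ) (eF μ θ))
          = (c ω * (starRingEnd ℂ) (c μ)) * (eF ω θ * (starRingEnd ℂ) (eF μ θ)) by ring,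
        eF_mul_conj]
    calc ∫ θ : Fin L → ℝ in Set.pi Set.univ (fun _ => Set.Ico (0:ℝ) (2 * Real.pi)),
          ((fnoisy θ - ftrunc θ) * (starRingEnd ℂ) (fnoisy θ - ftrunc θ))
        = ∑ ω ∈ T, ∑ μ ∈ T, (c ω * (starRingEnd ℂ) (c μ)) *
            ∫ θ : Fin L → ℝ in Set.pi Set.univ (fun _ => Set.Ico (0:ℝ) (2 * Real.pi)),
              eF (ω - μ) θ := by
          simp only [hrw]
          rw [integral_finset_sum T (fun ω _ => integrable_finset_sum T
            (fun μ _ => ((eF_integrableOn (ω - μ)).const_mul _)))]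
          refine Finset.sum_congr rfl fun ω _ => ?_
          rw [integral_finset_sum T (fun μ _ => ((eF_integrableOn (ω - μ)).const_mul _))]
          exact Finset.sum_congr rfl fun μ _ => integral_const_mul _ _
      _ = ∑ ω ∈ T, ((‖c ω‖ ^ 2 : ℝ) : ℂ) * (((2 * Real.pi) ^ L : ℝ) : ℂ) := by
          refine Finset.sum_congr rfl fun ω hω => ?_
          rw [Finset.sum_eq_single_of_mem ω hω
            (fun μ _ hμ => by rw [eF_integral, if_neg (by
              simpa [sub_eq_zero] using (Ne.symm hμ)), mul_zero])]
          rw [eF_integral, if_pos (sub_self ω), Complex.mul_conj, ← Complex.sq_norm]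
      _ = _ := by rw [← Finset.sum_mul, mul_comm]
  have hre : ∫ θ : Fin L → ℝ in Set.pi Set.univ (fun _ => Set.Ico (0:ℝ) (2 * Real.pi)),
        ‖fnoisy θ - ftrunc θ‖ ^ 2
      = ((2 * Real.pi) ^ L : ℝ) * ∑ ω ∈ T, ‖c ω‖ ^ 2 := by
    apply Complex.ofReal_injective
    calc ((∫ θ : Fin L → ℝ in Set.pi Set.univ (fun _ => Set.Ico (0:ℝ) (2 * Real.pi)),
            ‖fnoisy θ - ftrunc θ‖ ^ 2 : ℝ) : ℂ)
        = ∫ θ : Fin L → ℝ in Set.pi Set.univ (fun _ => Set.Ico (0:ℝ) (2 * Real.pi)),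
            ((‖fnoisy θ - ftrunc θ‖ ^ 2 : ℝ) : ℂ) := integral_ofReal.symm
      _ = ∫ θ : Fin L → ℝ in Set.pi Set.univ (fun _ => Set.Ico (0:ℝ) (2 * Real.pi)),
            ((fnoisy θ - ftrunc θ) * (starRingEnd ℂ) (fnoisy θ - ftrunc θ)) := by
          refine integral_congr_ae (Filter.Eventually.of_forall fun θ => ?_)
          dsimp only
          rw [Complex.mul_conj, Complex.sq_norm]
      _ = (((2 * Real.pi) ^ L : ℝ) : ℂ) * ∑ ω ∈ T, ((‖c ω‖ ^ 2 : ℝ) : ℂ) := hInt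
      _ = _ := by push_cast; ring
  rw [hre, inv_mul_cancel_left₀ (by positivity : ((2 * Real.pi) ^ L : ℝ) ≠ 0)]
  have hbound : ∀ ω ∈ T, ‖c ω‖ ^ 2 ≤ x ^ (2 * η) * ‖a ω‖ ^ 2 := by
    intro ω hω
    have hωη : η < nrm ω := by
      rw [hT, Finset.mem_filter] at hω
      omega
    have h1 : ‖c ω‖ ^ 2 = x ^ (2 * nrm ω) * ‖a ω‖ ^ 2 := by
      rw [hc]
      rw [norm_mul, Complex.norm_real,
        Real.norm_of_nonneg (by positivity : (0:ℝ) ≤ x ^ nrm ω), mul_pow, ← pow_mul,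
        mul_comm (nrm ω) 2]
    rw [h1]
    have h2 : x ^ (2 * nrm ω) ≤ x ^ (2 * η) :=
      pow_le_pow_of_le_one (le_of_lt hx0) (le_of_lt hx1) (by omega)
    exact mul_le_mul_of_nonneg_right h2 (by positivity)
  calc ∑ ω ∈ T, ‖c ω‖ ^ 2
      ≤ ∑ ω ∈ T, x ^ (2 * η) * ‖a ω‖ ^ 2 := Finset.sum_le_sum hbound
    _ = x ^ (2 * η) * ∑ ω ∈ T, ‖a ω‖ ^ 2 := by rw [Finset.mul_sum]
    _ ≤ x ^ (2 * η) * ∑ ω ∈ S, ‖a ω‖ ^ 2 := by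
        refine mul_le_mul_of_nonneg_left ?_ (by positivity)
        exact Finset.sum_le_sum_of_subset_of_nonneg (Finset.filter_subset _ _)
          (fun ω _ _ => by positivity)
    _ ≤ x ^ (2 * η) * 1 := mul_le_mul_of_nonneg_left hParseval (by positivity)
    _ = x ^ (2 * η) := mul_one _
    _ ≤ ε := hpow
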